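/- Let r ∈ ℕ, r ≥ 1, k ∈ ℤ with 0 ≤ k ≤ r-1, λ ≥ 0, and let u be as in the boundary value problem (-1)^r u^{(2r)} + λu = 0 on (-1,1) with u^{(s)}(-1) = (-1)^{k-1}δ_{r-k-1,s}, u^{(s)}(1) = 0 for s = 0,...,r-1. Then for every f with f^{(r-1)} absolutely continuous and f^{(r)} ∈ L², |f^{(k)}(-1)| ≤ ‖u^{(r)}‖_{L²} ‖f‖_{L²} + ‖u‖_{L²} ‖f^{(r)}‖_{L²}. -/

import Mathlib

open Set intervalIntegral

lemma my_cs (g h : ℝ → ℝ) (hg : Continuous g) (hh : Continuous h) :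
    |∫ x in (-1:ℝ)..1, g x * h x|
      ≤ Real.sqrt (∫ x in (-1:ℝ)..1, g x ^ 2) * Real.sqrt (∫ x in (-1:ℝ)..1, h x ^ 2) := by
  set A := ∫ x in (-1:ℝ)..1, g x ^ 2 with hAdef
  set B := ∫ x in (-1:ℝ)..1, g x * h x with hBdef
  set C := ∫ x in (-1:ℝ)..1, h x ^ 2 with hCdef
  have hA : 0 ≤ A := intervalIntegral.integral_nonneg (by norm_num) (fun x _ => sq_nonneg _)
  have hC : 0 ≤ C := intervalIntegral.integral_nonneg (by norm_num) (fun x _ => sq_nonneg _)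
  have key : ∀ t : ℝ, 0 ≤ C * (t * t) + (2 * B) * t + A := by
    intro t
    have hnn : 0 ≤ ∫ x in (-1:ℝ)..1, (g x + t * h x) ^ 2 :=
      intervalIntegral.integral_nonneg (by norm_num) (fun x _ => sq_nonneg _)
    have expand : ∫ x in (-1:ℝ)..1, (g x + t * h x) ^ 2
        = A + 2 * t * B + (t * t) * C := by
      have h1 : ∀ x : ℝ, (g x + t * h x) ^ 2
          = g x ^ 2 + (2 * t) * (g x * h x) + (t * t) * (h x ^ 2) := by intro x; ring
      simp_rw [h1]
      rw [intervalIntegral.integral_add, intervalIntegral.integral_add,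
        intervalIntegral.integral_const_mul, intervalIntegral.integral_const_mul]
      · exact ((hg.pow 2).intervalIntegrable _ _)
      · exact ((continuous_const.mul (hg.mul hh)).intervalIntegrable _ _)
      · exact (((hg.pow 2).add (continuous_const.mul (hg.mul hh))).intervalIntegrable _ _)
      · exact ((continuous_const.mul (hh.pow 2)).intervalIntegrable _ _)
    nlinarith [hnn, expand]
  have hd := discrim_le_zero key
  have hB2 : B ^ 2 ≤ A * C := by
    simp only [discrim] at hd
    nlinarith [hd]
  calc |B| = Real.sqrt (B ^ 2) := (Real.sqrt_sq_eq_abs B).symm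
    _ ≤ Real.sqrt (A * C) := Real.sqrt_le_sqrt hB2
    _ = Real.sqrt A * Real.sqrt C := Real.sqrt_mul hA C


/-- Repeated integration by parts. -/
lemma my_ibp : ∀ (n : ℕ) (u f : ℝ → ℝ), ContDiff ℝ (n : ℕ∞) u → ContDiff ℝ (n : ℕ∞) f →
    ∫ x in (-1:ℝ)..1, u x * iteratedDeriv n f x
      = (∑ j ∈ Finset.range n, (-1:ℝ)^j *
          (iteratedDeriv j u 1 * iteratedDeriv (n-1-j) f 1
            - iteratedDeriv j u (-1) * iteratedDeriv (n-1-j) f (-1)))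
        + (-1:ℝ)^n * ∫ x in (-1:ℝ)..1, iteratedDeriv n u x * f x := by
  intro n
  induction n with
  | zero => intro u f hu hf; simp [iteratedDeriv_zero]
  | succ n ih =>
    intro u f hu hf
    have hu1 : Differentiable ℝ u := hu.differentiable (by simp)
    have hfd : Differentiable ℝ (iteratedDeriv n f) :=
      hf.differentiable_iteratedDeriv n (by exact_mod_cast Nat.lt_succ_self n)
    have hcu' : Continuous (deriv u) := by
      have := hu.continuous_iteratedDeriv 1 (by exact_mod_cast Nat.succ_le_succ (Nat.zero_le n))
      simpa [iteratedDeriv_one] using this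
    have hcf' : Continuous (iteratedDeriv (n+1) f) :=
      hf.continuous_iteratedDeriv (n+1) le_rfl
    have key : ∫ x in (-1:ℝ)..1, u x * iteratedDeriv (n+1) f x
        = u 1 * iteratedDeriv n f 1 - u (-1) * iteratedDeriv n f (-1)
          - ∫ x in (-1:ℝ)..1, deriv u x * iteratedDeriv n f x := by
      apply integral_mul_deriv_eq_deriv_mul
      · exact fun x _ => (hu1 x).hasDerivAt
      · intro x _
        rw [iteratedDeriv_succ]
        exact (hfd x).hasDerivAt
      · exact hcu'.intervalIntegrable _ _
      · exact hcf'.intervalIntegrable _ _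
    have hu2 : ContDiff ℝ ((n : ℕ∞) + 1) u := by exact_mod_cast hu
    have hu' : ContDiff ℝ (n : ℕ∞) (deriv u) := (contDiff_succ_iff_deriv.mp hu2).2.2
    have ih' := ih (deriv u) f hu' (hf.of_le (by exact_mod_cast Nat.le_succ n))
    simp only [← iteratedDeriv_succ'] at ih'
    rw [key, ih', Finset.sum_range_succ']
    simp only [pow_zero, one_mul, iteratedDeriv_zero, Nat.add_sub_cancel, Nat.sub_zero]
    have hsum : (∑ j ∈ Finset.range n, (-1:ℝ)^(j+1) *
          (iteratedDeriv (j+1) u 1 * iteratedDeriv (n-(j+1)) f 1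
            - iteratedDeriv (j+1) u (-1) * iteratedDeriv (n-(j+1)) f (-1)))
        = - ∑ j ∈ Finset.range n, (-1:ℝ)^j *
          (iteratedDeriv (j+1) u 1 * iteratedDeriv (n-1-j) f 1
            - iteratedDeriv (j+1) u (-1) * iteratedDeriv (n-1-j) f (-1)) := by
      rw [← Finset.sum_neg_distrib]
      apply Finset.sum_congr rfl
      intro j hj
      have hidx : n - (j+1) = n - 1 - j := by omega
      rw [hidx]; ring
    rw [hsum]
    ring

/-- Pointwise Landau–Kolmogorov inequality at `t = -1`: with `u` solving the boundary value
problem `(-1)^r u^{(2r)} + λu = 0`, `u^{(s)}(-1) = (-1)^{k-1} δ_{r-k-1,s}`, `u^{(s)}(1) = 0`,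
one has `|f^{(k)}(-1)| ≤ ‖u^{(r)}‖₂ ‖f‖₂ + ‖u‖₂ ‖f^{(r)}‖₂`. -/
theorem stmt_9 (r k : ℕ) (hr : 1 ≤ r) (hk : k ≤ r - 1) (lam : ℝ) (hlam : 0 ≤ lam)
    (u : ℝ → ℝ) (hu : ContDiff ℝ ((2 * r : ℕ) : ℕ∞) u)
    (hode : ∀ x ∈ Ioo (-1 : ℝ) 1, (-1 : ℝ) ^ r * iteratedDeriv (2 * r) u x + lam * u x = 0)
    (hbcl : ∀ s < r, iteratedDeriv s u (-1) = (-1 : ℝ) ^ (k + 1) * (if r - k - 1 = s then 1 else 0))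
    (hbcr : ∀ s < r, iteratedDeriv s u 1 = 0)
    (f : ℝ → ℝ) (hf : ContDiff ℝ (r : ℕ∞) f) :
    |iteratedDeriv k f (-1)|
      ≤ Real.sqrt (∫ x in (-1 : ℝ)..1, (iteratedDeriv r u x) ^ 2) *
          Real.sqrt (∫ x in (-1 : ℝ)..1, (f x) ^ 2)
        + Real.sqrt (∫ x in (-1 : ℝ)..1, (u x) ^ 2) *
          Real.sqrt (∫ x in (-1 : ℝ)..1, (iteratedDeriv r f x) ^ 2) := by
  have h2r : r ≤ 2 * r := by omega
  have hur : ContDiff ℝ (r : ℕ∞) u := hu.of_le (by exact_mod_cast Nat.cast_le.mpr h2r)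
  have key := my_ibp r u f hur hf
  -- evaluate the boundary sum
  have hterm : ∀ j ∈ Finset.range r, (-1:ℝ)^j *
      (iteratedDeriv j u 1 * iteratedDeriv (r-1-j) f 1
        - iteratedDeriv j u (-1) * iteratedDeriv (r-1-j) f (-1))
      = if r - k - 1 = j then -(-1:ℝ)^r * iteratedDeriv k f (-1) else 0 := by
    intro j hj
    rw [Finset.mem_range] at hj
    rw [hbcr j hj, hbcl j hj]
    by_cases hcase : r - k - 1 = j
    · subst hcase
      simp only [eq_self_iff_true, if_true, ite_true]
      have h1 : r - 1 - (r - k - 1) = k := by omega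
      rw [h1]
      have h2 : (-1:ℝ)^(r-k-1) * (-1:ℝ)^(k+1) = (-1:ℝ)^r := by
        rw [← pow_add]; congr 1; omega
      linear_combination (-(iteratedDeriv k f (-1))) * h2
    · simp [hcase]
  rw [Finset.sum_congr rfl hterm, Finset.sum_ite_eq] at key
  rw [if_pos (Finset.mem_range.mpr (by omega))] at key
  have hsq : ((-1:ℝ)^r) * ((-1:ℝ)^r) = 1 := by
    rw [← pow_add, ← two_mul, pow_mul]; norm_num
  have hid : iteratedDeriv k f (-1)
      = (∫ x in (-1:ℝ)..1, iteratedDeriv r u x * f x)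
        - (-1:ℝ)^r * ∫ x in (-1:ℝ)..1, u x * iteratedDeriv r f x := by
    linear_combination ((-1:ℝ)^r) * key
      + ((∫ x in (-1:ℝ)..1, iteratedDeriv r u x * f x) - iteratedDeriv k f (-1)) * hsq
  have h1 := my_cs (iteratedDeriv r u) f
    (hu.continuous_iteratedDeriv r (by exact_mod_cast Nat.cast_le.mpr h2r)) hf.continuous
  have h2 := my_cs u (iteratedDeriv r f) hur.continuous (hf.continuous_iteratedDeriv r le_rfl)
  rw [hid]
  calc |(∫ x in (-1:ℝ)..1, iteratedDeriv r u x * f x)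
        - (-1:ℝ)^r * ∫ x in (-1:ℝ)..1, u x * iteratedDeriv r f x|
      ≤ |∫ x in (-1:ℝ)..1, iteratedDeriv r u x * f x|
        + |(-1:ℝ)^r * ∫ x in (-1:ℝ)..1, u x * iteratedDeriv r f x| := abs_sub _ _
    _ = |∫ x in (-1:ℝ)..1, iteratedDeriv r u x * f x|
        + |∫ x in (-1:ℝ)..1, u x * iteratedDeriv r f x| := by
          rw [abs_mul, abs_pow, abs_neg, abs_one, one_pow, one_mul]
    _ ≤ _ := add_le_add h1 h2
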